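/- Let A be a memory interval and let B₁,…,B_k be all branches of T intersecting A, ordered left-to-right. Then the sequence of depths of the topmost vertices of these branches contained in A, namely (min_{v ∈ B_i ∩ A} d(v)) for i = 1,…,k, is non-increasing. -/

import Mathlib

namespace VEB

inductive OTree : Type where
  | node : List OTree → OTree

def OTree.children : OTree → List OTree
  | .node cs => cs

mutual
  def height : OTree → ℕ
    | .node cs => 1 + heightList cs
  def heightList : List OTree → ℕ
    | [] => 0
    | c :: cs => max (height c) (heightList cs)
end

def subtreeAt? : OTree → List ℕ → Option OTree
  | t, [] => some t
  | t, i :: p =>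
    match t.children[i]? with
    | some c => subtreeAt? c p
    | none => none

/-- `p` is (the path of) a vertex of `t`. -/
def IsVertex (t : OTree) (p : List ℕ) : Prop := (subtreeAt? t p).isSome

/-- `p` is a leaf of `t`. -/
def IsLeaf (t : OTree) (p : List ℕ) : Prop := subtreeAt? t p = some (.node [])

/-- All leaves of `t` are at the same depth (the bottom level). -/
def Uniform (t : OTree) : Prop := ∀ p, IsLeaf t p → p.length + 1 = height t

/-- The top `m+1` levels of `t` (the truncation of height `m+1`). -/
def trunc : ℕ → OTree → OTree
  | 0, _ => .node []
  | m+1, t => .node (t.children.map (trunc m))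

/-- Paths of the vertices at depth `m`, in left-to-right order. -/
def levelPaths : ℕ → OTree → List (List ℕ)
  | 0, _ => [[]]
  | m+1, t => (t.children.zipIdx.map fun ic => (levelPaths m ic.1).map (ic.2 :: ·)).flatten

/-- The level at which a tree of height `h` is cut: `max ⌊ε h⌋ 1`. -/
noncomputable def cutLevel (ε : ℝ) (h : ℕ) : ℕ := max ⌊ε * (h : ℝ)⌋₊ 1

/-- The van Emde Boas order of the vertex paths of `t` (with recursion fuel). -/
noncomputable def vEBAux (ε : ℝ) : ℕ → OTree → List (List ℕ)
  | 0, _ => []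
  | fuel+1, t =>
    if height t ≤ 1 then [[]]
    else
      let m := cutLevel ε (height t)
      vEBAux ε fuel (trunc (m - 1) t) ++
        ((levelPaths m t).map fun q =>
          match subtreeAt? t q with
          | some s => (vEBAux ε fuel s).map (q ++ ·)
          | none => []).flatten

/-- The van Emde Boas order `vEB_ε(t)` of the vertex paths of `t`. -/
noncomputable def vEB (ε : ℝ) (t : OTree) : List (List ℕ) := vEBAux ε (height t) t

/-- Position (index) of vertex `p` in the van Emde Boas order. -/
noncomputable def pos (ε : ℝ) (t : OTree) (p : List ℕ) : ℕ := (vEB ε t).idxOf p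

/-- `A` is a set of vertices occupying consecutive positions in `vEB_ε(t)`. -/
def MemInterval (ε : ℝ) (t : OTree) (A : Set (List ℕ)) : Prop :=
  ∃ i n, A = {p | p ∈ ((vEB ε t).drop i).take n}

/-- The vertices of the decomposition `D` of `t`: pairs `(p, k)` of the root path
and the height of a decomposition subtree (with recursion fuel). -/
noncomputable def decompAux (ε : ℝ) : ℕ → OTree → List (List ℕ × ℕ)
  | 0, _ => []
  | fuel+1, t =>
    if height t ≤ 1 then [([], 1)]
    else
      let m := cutLevel ε (height t)
      ([], height t) ::
        (decompAux ε fuel (trunc (m - 1) t) ++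
          ((levelPaths m t).map fun q =>
            match subtreeAt? t q with
            | some s => (decompAux ε fuel s).map fun r => (q ++ r.1, r.2)
            | none => []).flatten)

/-- The vertices of the decomposition `D` of `t`. -/
noncomputable def decompVerts (ε : ℝ) (t : OTree) : List (List ℕ × ℕ) :=
  decompAux ε (height t) t

/-- The children in the decomposition tree `D` of the decomposition vertex `(p, k)`:
the top tree followed by the bottom trees in left-to-right order. -/
noncomputable def dChildren (ε : ℝ) (t : OTree) (p : List ℕ) (k : ℕ) : List (List ℕ × ℕ) :=
  if k ≤ 1 then []
  else
    match subtreeAt? t p with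
    | some s =>
      (p, cutLevel ε k) ::
        (levelPaths (cutLevel ε k) s).map fun q => (p ++ q, k - cutLevel ε k)
    | none => []

/-- The decomposition subtree `(p, k)` contains the vertex `w` of `t`;
equivalently, the leaf `{w}` of `D` lies in the subtree of `D` rooted at `(p, k)`. -/
def DContains (p : List ℕ) (k : ℕ) (w : List ℕ) : Prop :=
  p <+: w ∧ w.length < p.length + k

/-- Vertex `v` is to the left of the branch with leaf `ℓ`. -/
def LeftOfBranch (v ℓ : List ℕ) : Prop := List.Lex (· < ·) v (ℓ.take v.length)

/-- Vertex `v` is to the right of the branch with leaf `ℓ`. -/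
def RightOfBranch (v ℓ : List ℕ) : Prop := List.Lex (· < ·) (ℓ.take v.length) v

/-- Every internal vertex of `t` has at least `a` children. -/
def MinArity (t : OTree) (a : ℕ) : Prop :=
  ∀ p s, subtreeAt? t p = some s → s.children ≠ [] → a ≤ s.children.length

/-- Every internal vertex of `t` has at most `b` children. -/
def MaxArity (t : OTree) (b : ℕ) : Prop :=
  ∀ p s, subtreeAt? t p = some s → s.children.length ≤ b

/-- `w` lies on the leftmost branch descending from `v` (always taking the leftmost child). -/
def OnLeftmostBranch (v w : List ℕ) : Prop :=
  v <+: w ∧ ∀ n (hn : n < w.length), v.length ≤ n → w.get ⟨n, hn⟩ = 0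

/-- `w` lies on the rightmost branch descending from `v` (always taking the rightmost child). -/
def OnRightmostBranch (t : OTree) (v w : List ℕ) : Prop :=
  v <+: w ∧ ∀ n (hn : n < w.length), v.length ≤ n →
    ∀ s, subtreeAt? t (w.take n) = some s → w.get ⟨n, hn⟩ + 1 = s.children.length


/-! ### Auxiliary lemmas for Statement 6 -/

section Aux

lemma height_node' (cs : List OTree) : height (.node cs) = 1 + heightList cs := by
  rw [height]

lemma height_pos' (t : OTree) : 0 < height t := by
  cases t with | node cs => rw [height_node']; omega

lemma height_child' {cs : List OTree} {c : OTree} (h : c ∈ cs) : height c ≤ heightList cs := by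
  induction cs with
  | nil => cases h
  | cons d cs ih =>
    rw [heightList]
    rcases List.mem_cons.1 h with h | h
    · subst h; exact le_max_left _ _
    · exact le_trans (ih h) (le_max_right _ _)

lemma children_getElem?_height {t : OTree} {i : ℕ} {c : OTree}
    (h : t.children[i]? = some c) : height c + 1 ≤ height t := by
  cases t with | node cs =>
  have hm : c ∈ cs := List.mem_of_getElem? h
  rw [height_node']
  have := height_child' hm
  omega

lemma children_eq_nil_of_height_le_one {t : OTree} (h : height t ≤ 1) :
    t.children = [] := by
  cases t with | node cs =>
  rw [height_node'] at h
  have : heightList cs = 0 := by omega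
  cases cs with
  | nil => rfl
  | cons c cs =>
    rw [heightList] at this
    have := height_pos' c
    omega

lemma subtreeAt?_append' (t : OTree) (p q : List ℕ) :
    subtreeAt? t (p ++ q) = (subtreeAt? t p).bind (fun s => subtreeAt? s q) := by
  induction p generalizing t with
  | nil => simp [subtreeAt?]
  | cons i p ih =>
    rw [List.cons_append, subtreeAt?, subtreeAt?]
    cases t.children[i]? with
    | none => simp
    | some c => simp [ih]

lemma height_subtree {t : OTree} {p : List ℕ} {s : OTree}
    (h : subtreeAt? t p = some s) : p.length + height s ≤ height t := by
  induction p generalizing t with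
  | nil => rw [subtreeAt?] at h; cases h; simp
  | cons i p ih =>
    rw [subtreeAt?] at h
    cases hc : t.children[i]? with
    | none => rw [hc] at h; cases h
    | some c =>
      rw [hc] at h
      have h1 := ih h
      have h2 := children_getElem?_height hc
      simp only [List.length_cons]
      omega

lemma isVertex_prefix {t : OTree} {p q : List ℕ} (h : (subtreeAt? t (p ++ q)).isSome) :
    (subtreeAt? t p).isSome := by
  rw [subtreeAt?_append'] at h
  cases hp : subtreeAt? t p with
  | none => rw [hp] at h; simp at h
  | some s => simp

lemma heightList_le {cs : List OTree} {n : ℕ} (h : ∀ c ∈ cs, height c ≤ n) :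
    heightList cs ≤ n := by
  induction cs with
  | nil => rw [heightList]; omega
  | cons c cs ih =>
    rw [heightList]
    exact max_le (h c (by simp)) (ih fun d hd => h d (by simp [hd]))

lemma height_trunc_le (k : ℕ) (t : OTree) : height (trunc k t) ≤ k + 1 := by
  induction k generalizing t with
  | zero => rw [trunc, height_node', heightList]
  | succ m ih =>
    rw [trunc, height_node']
    have : heightList (t.children.map (trunc m)) ≤ m + 1 := by
      apply heightList_le
      intro c hc
      rcases List.mem_map.1 hc with ⟨d, _, rfl⟩
      exact ih d
    omega

lemma isVertex_trunc {p : List ℕ} {k : ℕ} {t : OTree} (hl : p.length ≤ k)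
    (h : (subtreeAt? t p).isSome) : (subtreeAt? (trunc k t) p).isSome := by
  induction p generalizing k t with
  | nil => rw [subtreeAt?]; simp
  | cons i p ih =>
    cases k with
    | zero => simp at hl
    | succ m =>
      rw [subtreeAt?] at h ⊢
      rw [trunc]
      show (match (OTree.children (.node (t.children.map (trunc m))))[i]? with
        | some c => subtreeAt? c p | none => none).isSome
      rw [OTree.children]
      rw [List.getElem?_map]
      cases hc : t.children[i]? with
      | none => rw [hc] at h; simp at h
      | some c =>
        rw [hc] at h
        simp only [Option.map_some]
        exact ih (by simpa using hl) h

lemma mem_levelPaths {m : ℕ} {t : OTree} {q : List ℕ} :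
    q ∈ levelPaths m t ↔ ((subtreeAt? t q).isSome ∧ q.length = m) := by
  induction m generalizing t q with
  | zero =>
    rw [levelPaths]
    simp only [List.mem_singleton]
    constructor
    · rintro rfl; exact ⟨by rw [subtreeAt?]; simp, rfl⟩
    · rintro ⟨_, h⟩; exact List.eq_nil_of_length_eq_zero h
  | succ m ih =>
    rw [levelPaths]
    simp only [List.mem_flatten, List.mem_map]
    constructor
    · rintro ⟨l, ⟨⟨c, i⟩, hic, rfl⟩, hq⟩
      rcases List.mem_map.1 hq with ⟨q', hq', rfl⟩
      have hc : t.children[i]? = some c := by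
        simpa using List.mem_zipIdx_iff_getElem?.1 hic
      rcases ih.1 hq' with ⟨h1, h2⟩
      refine ⟨?_, by simp [h2]⟩
      rw [subtreeAt?, hc]
      exact h1
    · rintro ⟨h1, h2⟩
      cases q with
      | nil => simp at h2
      | cons i q' =>
        rw [subtreeAt?] at h1
        cases hc : t.children[i]? with
        | none => rw [hc] at h1; simp at h1
        | some c =>
          rw [hc] at h1
          refine ⟨(levelPaths m c).map (i :: ·),
            ⟨⟨c, i⟩, List.mem_zipIdx_iff_getElem?.2 (by simpa using hc), rfl⟩, ?_⟩
          exact List.mem_map_of_mem (ih.2 ⟨h1, by simpa using h2⟩)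

lemma enumFrom_pairwise (n : ℕ) (l : List OTree) :
    List.Pairwise (fun a b => a.2 < b.2) (List.zipIdx l n) := by
  induction l generalizing n with
  | nil => simp
  | cons c cs ih =>
    rw [List.zipIdx_cons]
    refine List.Pairwise.cons ?_ (ih (n+1))
    rintro ⟨x, j⟩ hb
    have := List.mem_zipIdx hb
    show n < j
    omega

lemma levelPaths_pairwise (m : ℕ) (t : OTree) :
    List.Pairwise (List.Lex (· < ·)) (levelPaths m t) := by
  induction m generalizing t with
  | zero => rw [levelPaths]; simp
  | succ m ih =>
    rw [levelPaths]
    rw [List.pairwise_flatten]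
    constructor
    · rintro l hl
      rcases List.mem_map.1 hl with ⟨⟨c, i⟩, _, rfl⟩
      exact (ih c).map _ (fun a b h => List.Lex.cons h)
    · refine List.Pairwise.map _ ?_ (by exact enumFrom_pairwise 0 t.children)
      rintro ⟨c, i⟩ ⟨d, j⟩ hij x hx y hy
      rcases List.mem_map.1 hx with ⟨q, _, rfl⟩
      rcases List.mem_map.1 hy with ⟨r, _, rfl⟩
      exact List.Lex.rel hij

lemma lex_irrefl' {v : List ℕ} (h : List.Lex (· < ·) v v) : False :=
  (Std.Asymm.asymm _ _ h) h

lemma lex_append_same (q : List ℕ) {r r' : List ℕ} (h : List.Lex (· < ·) r r') :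
    List.Lex (· < ·) (q ++ r) (q ++ r') := by
  induction q with
  | nil => exact h
  | cons a q ih => exact List.Lex.cons ih

lemma lex_append_of_eq_length {v w : List ℕ} (h : List.Lex (· < ·) v w)
    (hl : v.length = w.length) (r r' : List ℕ) :
    List.Lex (· < ·) (v ++ r) (w ++ r') := by
  induction h generalizing r r' with
  | nil => simp at hl
  | @rel a l₁ b l₂ hab => exact List.Lex.rel hab
  | @cons a l₁ l₂ h ih => exact List.Lex.cons (ih (by simpa using hl) r r')

lemma lex_take {v w : List ℕ} (h : List.Lex (· < ·) v w) (n : ℕ) :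
    List.Lex (· < ·) (v.take n) (w.take n) ∨ v.take n = w.take n := by
  induction h generalizing n with
  | @nil b l =>
    cases n with
    | zero => right; rfl
    | succ n => left; simp only [List.take_nil, List.take_cons]; exact List.Lex.nil
  | @rel a l₁ b l₂ hab =>
    cases n with
    | zero => right; rfl
    | succ n => left; exact List.Lex.rel hab
  | @cons a l₁ l₂ h ih =>
    cases n with
    | zero => right; rfl
    | succ n =>
      rcases ih n with h' | h'
      · left; exact List.Lex.cons h'
      · right; simp [List.take_cons, h']

lemma cutLevel_pos (ε : ℝ) (h : ℕ) : 1 ≤ cutLevel ε h := le_max_right _ _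

lemma cutLevel_lt {ε : ℝ} (hε1 : ε ≤ 1/2) {h : ℕ} (hh : 2 ≤ h) : cutLevel ε h < h := by
  have h1 : ⌊ε * (h : ℝ)⌋₊ ≤ ⌊(h : ℝ) / 2⌋₊ := by
    apply Nat.floor_mono
    calc ε * (h : ℝ) ≤ (1/2) * h := by
          apply mul_le_mul_of_nonneg_right hε1 (by positivity)
      _ = (h : ℝ) / 2 := by ring
  have h2 : ⌊(h : ℝ) / 2⌋₊ = h / 2 := by
    rw [show ((2:ℝ) = ((2:ℕ):ℝ)) by norm_num, Nat.floor_div_natCast, Nat.floor_natCast]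
  rw [cutLevel]
  omega

lemma vEBAux_succ_of_le (ε : ℝ) (fuel : ℕ) (t : OTree) (h : height t ≤ 1) :
    vEBAux ε (fuel+1) t = [[]] := by
  rw [vEBAux, if_pos h]

lemma vEBAux_succ_of_gt (ε : ℝ) (fuel : ℕ) (t : OTree) (h : ¬ height t ≤ 1) :
    vEBAux ε (fuel+1) t =
      vEBAux ε fuel (trunc (cutLevel ε (height t) - 1) t) ++
        ((levelPaths (cutLevel ε (height t)) t).map fun q =>
          match subtreeAt? t q with
          | some s => (vEBAux ε fuel s).map (q ++ ·)
          | none => []).flatten := by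
  rw [vEBAux, if_neg h]

lemma length_lt_of_mem_vEBAux {ε : ℝ} (hε1 : ε ≤ 1/2) :
    ∀ (fuel : ℕ) (t : OTree) (p : List ℕ), p ∈ vEBAux ε fuel t → p.length < height t := by
  intro fuel
  induction fuel with
  | zero => intro t p hp; rw [vEBAux] at hp; cases hp
  | succ fuel ih =>
    intro t p hp
    by_cases hh : height t ≤ 1
    · rw [vEBAux_succ_of_le ε fuel t hh] at hp
      rcases List.mem_singleton.1 hp with rfl
      exact height_pos' t
    · rw [vEBAux_succ_of_gt ε fuel t hh] at hp
      have h2 : 2 ≤ height t := by omega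
      have hmh := cutLevel_lt hε1 h2
      rcases List.mem_append.1 hp with hp | hp
      · have := ih _ _ hp
        have := height_trunc_le (cutLevel ε (height t) - 1) t
        have := cutLevel_pos ε (height t)
        omega
      · rcases List.mem_flatten.1 hp with ⟨l, hl, hpl⟩
        rcases List.mem_map.1 hl with ⟨q, hq, rfl⟩
        rcases mem_levelPaths.1 hq with ⟨hqs, hqlen⟩
        cases hs : subtreeAt? t q with
        | none => rw [hs] at hqs; simp at hqs
        | some s =>
          rw [hs] at hpl
          rcases List.mem_map.1 hpl with ⟨r, hr, rfl⟩
          have h3 := ih _ _ hr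
          have h4 := height_subtree hs
          simp only [List.length_append]
          omega

lemma mem_vEBAux {ε : ℝ} (hε1 : ε ≤ 1/2) :
    ∀ (fuel : ℕ) (t : OTree) (p : List ℕ), height t ≤ fuel →
      (subtreeAt? t p).isSome → p ∈ vEBAux ε fuel t := by
  intro fuel
  induction fuel with
  | zero => intro t p h _; have := height_pos' t; omega
  | succ fuel ih =>
    intro t p hf hp
    by_cases hh : height t ≤ 1
    · rw [vEBAux_succ_of_le ε fuel t hh]
      have hc := children_eq_nil_of_height_le_one hh
      cases p with
      | nil => simp
      | cons i p' =>
        rw [subtreeAt?, hc] at hp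
        simp at hp
    · rw [vEBAux_succ_of_gt ε fuel t hh]
      have h2 : 2 ≤ height t := by omega
      have hmh := cutLevel_lt hε1 h2
      have hm1 := cutLevel_pos ε (height t)
      set m := cutLevel ε (height t) with hm
      by_cases hlen : p.length < m
      · apply List.mem_append_left
        apply ih
        · have := height_trunc_le (m - 1) t
          omega
        · exact isVertex_trunc (by omega) hp
      · apply List.mem_append_right
        have hqr : p.take m ++ p.drop m = p := List.take_append_drop m p
        have hqv : (subtreeAt? t (p.take m)).isSome := by
          apply isVertex_prefix (q := p.drop m)
          rw [hqr]; exact hp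
        have hqlen : (p.take m).length = m := by
          rw [List.length_take]; omega
        have hqlp : p.take m ∈ levelPaths m t := mem_levelPaths.2 ⟨hqv, hqlen⟩
        cases hs : subtreeAt? t (p.take m) with
        | none => rw [hs] at hqv; simp at hqv
        | some s =>
          have hrv : (subtreeAt? s (p.drop m)).isSome := by
            have heq := subtreeAt?_append' t (p.take m) (p.drop m)
            rw [hqr, hs] at heq
            simp only [Option.bind_some] at heq
            rw [heq] at hp
            exact hp
          have hhs : height s ≤ fuel := by
            have := height_subtree hs
            omega
          apply List.mem_flatten.2
          refine ⟨_, List.mem_map_of_mem hqlp, ?_⟩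
          rw [hs]
          exact List.mem_map.2 ⟨p.drop m, ih s (p.drop m) hhs hrv, hqr⟩

/-- The pairwise invariant of the van Emde Boas order: an earlier vertex is an
ancestor of a later one, or is to its left, or is strictly less deep. -/
def Rel (v w : List ℕ) : Prop :=
  (v <+: w ∨ (¬ w <+: v ∧ List.Lex (· < ·) v w) ∨ v.length < w.length) ∧ v ≠ w

lemma rel_cons_append (q : List ℕ) {r r' : List ℕ} (h : Rel r r') :
    Rel (q ++ r) (q ++ r') := by
  obtain ⟨h1, h2⟩ := h
  constructor
  · rcases h1 with h1 | ⟨h1a, h1b⟩ | h1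
    · exact Or.inl ((List.prefix_append_right_inj q).2 h1)
    · exact Or.inr (Or.inl ⟨fun hc => h1a ((List.prefix_append_right_inj q).1 hc),
        lex_append_same q h1b⟩)
    · refine Or.inr (Or.inr ?_); simp only [List.length_append]; omega
  · intro hc
    exact h2 (List.append_cancel_left hc)

lemma pairwise_vEBAux {ε : ℝ} (hε1 : ε ≤ 1/2) :
    ∀ (fuel : ℕ) (t : OTree), List.Pairwise Rel (vEBAux ε fuel t) := by
  intro fuel
  induction fuel with
  | zero => intro t; rw [vEBAux]; exact List.Pairwise.nil
  | succ fuel ih =>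
    intro t
    by_cases hh : height t ≤ 1
    · rw [vEBAux_succ_of_le ε fuel t hh]; simp
    · rw [vEBAux_succ_of_gt ε fuel t hh]
      have h2 : 2 ≤ height t := by omega
      set m := cutLevel ε (height t) with hm
      rw [List.pairwise_append]
      refine ⟨ih _, ?_, ?_⟩
      · rw [List.pairwise_flatten]
        constructor
        · intro l hl
          rcases List.mem_map.1 hl with ⟨q, _, rfl⟩
          cases hs : subtreeAt? t q with
          | none => exact List.Pairwise.nil
          | some s => exact (ih s).map _ (fun a b h => rel_cons_append q h)
        · have hlp : List.Pairwise
              (fun q q' => List.Lex (· < ·) q q' ∧ q.length = m ∧ q'.length = m)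
              (levelPaths m t) := by
            refine List.Pairwise.imp_of_mem ?_ (levelPaths_pairwise m t)
            intro a b ha hb hab
            exact ⟨hab, (mem_levelPaths.1 ha).2, (mem_levelPaths.1 hb).2⟩
          refine List.Pairwise.map _ ?_ hlp
          rintro q q' ⟨hlex, hql, hq'l⟩ x hx y hy
          have hqne : q ≠ q' := by rintro rfl; exact lex_irrefl' hlex
          cases hs : subtreeAt? t q with
          | none => rw [hs] at hx; cases hx
          | some s =>
            rw [hs] at hx
            cases hs' : subtreeAt? t q' with
            | none => rw [hs'] at hy; cases hy
            | some s' =>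
              rw [hs'] at hy
              rcases List.mem_map.1 hx with ⟨r, _, rfl⟩
              rcases List.mem_map.1 hy with ⟨r', _, rfl⟩
              constructor
              · refine Or.inr (Or.inl ⟨?_, lex_append_of_eq_length hlex (by omega) r r'⟩)
                rintro ⟨z, hz⟩
                rw [List.append_assoc] at hz
                exact hqne ((List.append_inj hz (by omega)).1).symm
              · intro hc
                exact hqne (List.append_inj hc (by omega)).1
      · intro v hv w hw
        have hvlen : v.length < m := by
          have h3 := length_lt_of_mem_vEBAux hε1 _ _ _ hv
          have h4 := height_trunc_le (m - 1) t
          have h5 := cutLevel_pos ε (height t)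
          omega
        rcases List.mem_flatten.1 hw with ⟨l, hl, hwl⟩
        rcases List.mem_map.1 hl with ⟨q, hq, rfl⟩
        have hqlen := (mem_levelPaths.1 hq).2
        cases hs : subtreeAt? t q with
        | none => rw [hs] at hwl; cases hwl
        | some s =>
          rw [hs] at hwl
          rcases List.mem_map.1 hwl with ⟨r, _, rfl⟩
          have hwlen : m ≤ (q ++ r).length := by
            simp only [List.length_append]; omega
          exact ⟨Or.inr (Or.inr (by omega)), fun hc => by
            have := congrArg List.length hc; simp at this; omega⟩

lemma le_of_pairwise {L : List (List ℕ)} (hP : List.Pairwise Rel L)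
    {a b : ℕ} (ha : a < L.length) (hb : b < L.length) (h : ¬ Rel L[b] L[a]) : a ≤ b := by
  by_contra hc
  push_neg at hc
  exact h (List.pairwise_iff_getElem.1 hP _ _ hb ha hc)

lemma mem_slice_iff {L : List (List ℕ)} {p : List ℕ} {i n : ℕ} :
    p ∈ (L.drop i).take n ↔ ∃ j, ∃ _ : j < L.length, L[j] = p ∧ i ≤ j ∧ j < i + n := by
  constructor
  · intro h
    rcases List.getElem_of_mem h with ⟨j, hj, hje⟩
    have hj' := hj
    rw [List.length_take, List.length_drop] at hj'
    rw [List.getElem_take, List.getElem_drop] at hje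
    exact ⟨i + j, by omega, hje, by omega, by omega⟩
  · rintro ⟨j, hj, hje, h1, h2⟩
    have hb : j - i < ((L.drop i).take n).length := by
      rw [List.length_take, List.length_drop]; omega
    have he : ((L.drop i).take n)[j - i] = p := by
      rw [List.getElem_take, List.getElem_drop]
      simp only [show i + (j - i) = j from by omega]
      exact hje
    exact he ▸ List.getElem_mem _

end Aux
/-- Among the branches intersecting a memory interval `A`, ordered
left-to-right, the depths of the topmost vertices of the branches contained in `A`
form a non-increasing sequence (stated for any two such branches, the left one `ℓ₁`
and the right one `ℓ₂`). -/
theorem topmost_depths_antitone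
    (ε : ℝ) (hε0 : 0 < ε) (hε1 : ε ≤ 1/2) (t : OTree) (ht : Uniform t)
    (A : Set (List ℕ)) (hA : MemInterval ε t A)
    (ℓ₁ ℓ₂ : List ℕ) (h1 : IsLeaf t ℓ₁) (h2 : IsLeaf t ℓ₂)
    (hord : List.Lex (· < ·) ℓ₁ ℓ₂)
    (hint1 : ∃ n, n ≤ ℓ₁.length ∧ ℓ₁.take n ∈ A)
    (hint2 : ∃ n, n ≤ ℓ₂.length ∧ ℓ₂.take n ∈ A) :
    sInf {n | n ≤ ℓ₂.length ∧ ℓ₂.take n ∈ A}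
      ≤ sInf {n | n ≤ ℓ₁.length ∧ ℓ₁.take n ∈ A} := by
  obtain ⟨i, n, hAeq⟩ := hA
  have hP : List.Pairwise Rel (vEB ε t) := pairwise_vEBAux hε1 _ _
  have hmemA : ∀ p, p ∈ A ↔
      ∃ j, ∃ _ : j < (vEB ε t).length, (vEB ε t)[j] = p ∧ i ≤ j ∧ j < i + n := by
    intro p
    rw [hAeq]
    exact mem_slice_iff
  have hlen12 : ℓ₁.length = ℓ₂.length := by
    have e1 := ht ℓ₁ h1
    have e2 := ht ℓ₂ h2
    omega
  have hm1 : sInf {n | n ≤ ℓ₁.length ∧ ℓ₁.take n ∈ A}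
      ∈ {n | n ≤ ℓ₁.length ∧ ℓ₁.take n ∈ A} := Nat.sInf_mem hint1
  have hm2 : sInf {n | n ≤ ℓ₂.length ∧ ℓ₂.take n ∈ A}
      ∈ {n | n ≤ ℓ₂.length ∧ ℓ₂.take n ∈ A} := Nat.sInf_mem hint2
  set n₁ := sInf {n | n ≤ ℓ₁.length ∧ ℓ₁.take n ∈ A} with hn₁
  set n₂ := sInf {n | n ≤ ℓ₂.length ∧ ℓ₂.take n ∈ A} with hn₂
  obtain ⟨hn1le, hn1A⟩ := hm1
  obtain ⟨hn2le, hn2A⟩ := hm2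
  by_cases hcase : n₂ ≤ n₁
  · exact hcase
  push_neg at hcase
  have hsuff : ℓ₂.take n₁ ∈ A → n₂ ≤ n₁ := fun h =>
    Nat.sInf_le ⟨by omega, h⟩
  apply hsuff
  have hvert2 : (subtreeAt? t ℓ₂).isSome := by
    have h2' : subtreeAt? t ℓ₂ = some (.node []) := h2
    rw [h2']; rfl
  have hv_vert : (subtreeAt? t (ℓ₂.take n₁)).isSome := by
    apply isVertex_prefix (q := ℓ₂.drop n₁)
    rw [List.take_append_drop]
    exact hvert2
  have hvL : ℓ₂.take n₁ ∈ vEB ε t := mem_vEBAux hε1 _ _ _ le_rfl hv_vert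
  obtain ⟨a, haL, haE, hai, han⟩ := (hmemA _).1 hn1A
  obtain ⟨b, hbL, hbE, hbi, hbn⟩ := (hmemA _).1 hn2A
  obtain ⟨c, hcL, hcE⟩ := List.getElem_of_mem hvL
  by_cases heq : ℓ₁.take n₁ = ℓ₂.take n₁
  · exact (hmemA _).2 ⟨a, haL, haE.trans heq, hai, han⟩
  · have hlex : List.Lex (· < ·) (ℓ₁.take n₁) (ℓ₂.take n₁) := by
      rcases lex_take hord n₁ with h | h
      · exact h
      · exact absurd h heq
    have hlenuv : (ℓ₁.take n₁).length = (ℓ₂.take n₁).length := by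
      rw [List.length_take, List.length_take]
      omega
    have hac : a ≤ c := by
      refine le_of_pairwise hP haL hcL ?_
      rw [hcE, haE]
      rintro ⟨hd, hne⟩
      rcases hd with hpre | ⟨_, hlx⟩ | hlt
      · exact hne (hpre.eq_of_length hlenuv.symm)
      · exact (Std.Asymm.asymm _ _ hlex) hlx
      · rw [List.length_take, List.length_take] at hlt
        omega
    have hvw : ℓ₂.take n₁ <+: ℓ₂.take n₂ :=
      List.take_prefix_take_left (le_of_lt hcase)
    have hcb : c ≤ b := by
      refine le_of_pairwise hP hcL hbL ?_
      rw [hcE, hbE]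
      rintro ⟨hd, hne⟩
      rcases hd with hpre | ⟨hnp, _⟩ | hlt
      · have := hpre.length_le
        rw [List.length_take, List.length_take] at this
        omega
      · exact hnp hvw
      · rw [List.length_take, List.length_take] at hlt
        omega
    exact (hmemA _).2 ⟨c, hcL, hcE, by omega, by omega⟩

end VEB
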